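/- A 2×2 integer matrix M has all entries nonnegative and determinant equal to 1 if and only if M belongs to the multiplicative submonoid of 2×2 integer matrices generated by L = [[1,0],[1,1]] and N = [[1,1],[0,1]]. -/

import Mathlib

private lemma LN_aux : ∀ n : ℕ, ∀ M : Matrix (Fin 2) (Fin 2) ℤ,
    (∀ i j, 0 ≤ M i j) → M.det = 1 →
    M 0 0 + M 0 1 + M 1 0 + M 1 1 ≤ (n : ℤ) →
    M ∈ Submonoid.closure
        ({!![1, 0; 1, 1], !![1, 1; 0, 1]} : Set (Matrix (Fin 2) (Fin 2) ℤ)) := by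
  intro n
  induction n with
  | zero =>
    intro M hpos hdet hsum
    exfalso
    have h00 := hpos 0 0; have h01 := hpos 0 1
    have h10 := hpos 1 0; have h11 := hpos 1 1
    have e00 : M 0 0 = 0 := by omega
    have e01 : M 0 1 = 0 := by omega
    have e10 : M 1 0 = 0 := by omega
    have e11 : M 1 1 = 0 := by omega
    rw [Matrix.det_fin_two, e00, e01, e10, e11] at hdet
    omega
  | succ n ih =>
    intro M hpos hdet hsum
    rw [Matrix.det_fin_two] at hdet
    set a := M 0 0 with ha
    set b := M 0 1 with hb
    set c := M 1 0 with hc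
    set d := M 1 1 with hd
    have h00 := hpos 0 0; have h01 := hpos 0 1
    have h10 := hpos 1 0; have h11 := hpos 1 1
    by_cases h1 : M = 1
    · rw [h1]; exact one_mem _
    have key : (c ≤ a ∧ d ≤ b ∧ 0 < c + d) ∨ (a ≤ c ∧ b ≤ d ∧ 0 < a + b) := by
      by_cases hca : c ≤ a
      · by_cases hdb : d ≤ b
        · left
          refine ⟨hca, hdb, ?_⟩
          by_contra h
          have hc0 : c = 0 := by omega
          have hd0 : d = 0 := by omega
          rw [hc0, hd0] at hdet; simp at hdet
        · -- c ≤ a, b < d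
          by_cases hac : a ≤ c
          · right
            refine ⟨hac, by omega, ?_⟩
            by_contra h
            have ha0 : a = 0 := by omega
            have hb0 : b = 0 := by omega
            rw [ha0, hb0] at hdet; simp at hdet
          · -- c < a, b < d : forces identity
            exfalso
            have h2 : b + c + 1 ≤ 1 := by nlinarith
            have hb0 : b = 0 := by omega
            have hc0 : c = 0 := by omega
            have had : a * d = 1 := by rw [hb0, hc0] at hdet; linarith
            have ha1 : a = 1 := by nlinarith
            have hd1 : d = 1 := by nlinarith
            apply h1
            ext i j
            fin_cases i <;> fin_cases j <;>
              simp [Matrix.one_apply] <;> omega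
      · -- a < c
        by_cases hdb : d ≤ b
        · -- a < c, d ≤ b: if d < b strict, contradiction; if d = b... a<c, d≤b
          -- det = a d - b c ; a ≤ c - 1, d ≤ b ⇒ a d - b c ≤ ?
          -- if d = b: det = b(a - c) ≤ -b ≤ 0 unless... contradiction anyway
          exfalso
          nlinarith
        · right
          refine ⟨by omega, by omega, ?_⟩
          by_contra h
          have ha0 : a = 0 := by omega
          have hb0 : b = 0 := by omega
          rw [ha0, hb0] at hdet; simp at hdet
    have hLmem : (!![1, 0; 1, 1] : Matrix (Fin 2) (Fin 2) ℤ) ∈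
        Submonoid.closure ({!![1, 0; 1, 1], !![1, 1; 0, 1]} : Set (Matrix (Fin 2) (Fin 2) ℤ)) :=
      Submonoid.subset_closure (Or.inl rfl)
    have hNmem : (!![1, 1; 0, 1] : Matrix (Fin 2) (Fin 2) ℤ) ∈
        Submonoid.closure ({!![1, 0; 1, 1], !![1, 1; 0, 1]} : Set (Matrix (Fin 2) (Fin 2) ℤ)) :=
      Submonoid.subset_closure (Or.inr rfl)
    rcases key with ⟨hca, hdb, hpos'⟩ | ⟨hac, hbd, hpos'⟩
    · -- M = N * M' with M' = [[a-c, b-d],[c,d]]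
      set M' : Matrix (Fin 2) (Fin 2) ℤ := !![a - c, b - d; c, d] with hM'
      have hEq : M = !![1, 1; 0, 1] * M' := by
        ext i j
        fin_cases i <;> fin_cases j <;>
          simp [hM', Matrix.mul_apply, Fin.sum_univ_two, ha, hb, hc, hd]
      rw [hEq]
      refine mul_mem hNmem (ih M' ?_ ?_ ?_)
      · intro i j; fin_cases i <;> fin_cases j <;> simp [hM'] <;> omega
      · rw [Matrix.det_fin_two]; simp [hM']; ring_nf; ring_nf at hdet; linarith
      · simp [hM']
        push_cast at hsum ⊢
        omega
    · -- M = L * M' with M' = [[a, b],[c-a, d-b]]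
      set M' : Matrix (Fin 2) (Fin 2) ℤ := !![a, b; c - a, d - b] with hM'
      have hEq : M = !![1, 0; 1, 1] * M' := by
        ext i j
        fin_cases i <;> fin_cases j <;>
          simp [hM', Matrix.mul_apply, Fin.sum_univ_two, ha, hb, hc, hd]
      rw [hEq]
      refine mul_mem hLmem (ih M' ?_ ?_ ?_)
      · intro i j; fin_cases i <;> fin_cases j <;> simp [hM'] <;> omega
      · rw [Matrix.det_fin_two]; simp [hM']; ring_nf; ring_nf at hdet; linarith
      · simp [hM']
        push_cast at hsum ⊢
        omega

theorem nonneg_det_one_iff_mem_closure_LN (M : Matrix (Fin 2) (Fin 2) ℤ) :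
    ((∀ i j, 0 ≤ M i j) ∧ M.det = 1) ↔
      M ∈ Submonoid.closure
        ({!![1, 0; 1, 1], !![1, 1; 0, 1]} : Set (Matrix (Fin 2) (Fin 2) ℤ)) := by
  constructor
  · rintro ⟨hpos, hdet⟩
    refine LN_aux (M 0 0 + M 0 1 + M 1 0 + M 1 1).toNat M hpos hdet ?_
    have := hpos 0 0; have := hpos 0 1; have := hpos 1 0; have := hpos 1 1
    omega
  · intro hM
    induction hM using Submonoid.closure_induction with
    | mem x hx =>
      rcases hx with h | h <;> subst h <;>
        refine ⟨?_, by simp [Matrix.det_fin_two]⟩ <;> intro i j <;> fin_cases i <;> fin_cases j <;> simp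
    | one =>
      refine ⟨?_, Matrix.det_one⟩
      intro i j
      rcases eq_or_ne i j with h | h <;> simp [Matrix.one_apply, h]
    | mul x y hx hy ihx ihy =>
      refine ⟨?_, by rw [Matrix.det_mul, ihx.2, ihy.2, one_mul]⟩
      intro i j
      rw [Matrix.mul_apply]
      exact Finset.sum_nonneg fun k _ => mul_nonneg (ihx.1 i k) (ihy.1 k j)
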